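/- Let W denote the Lambert W function on (0,∞) (the inverse of x ↦ x e^x restricted to x ≥ 0), and let h(y)=βy, λ(y)=1/c with β, c, δ > 0. Then ȳ(τ) := cW(e^{1-δτ}) - c(β+δ)/β satisfies the implicit relation e^{-δτ} = (f(ȳ(τ))/f(y₀))·(βȳ(τ)/c + β + δ)/β where f(y)=e^{y/c} and y₀ = -cδ/β, for all τ ≥ 0. -/

import Mathlib

open Real

/-- With `W` the Lambert W function on `(0,∞)`, `f(y)=e^{y/c}`, `h(y)=βy`,
`y₀ = -cδ/β`, the curve `ȳ(τ) = cW(e^{1-δτ}) - c(β+δ)/β` satisfies the implicit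
boundary relation `e^{-δτ} = (f(ȳ)/f(y₀))·(βȳ/c + β + δ)/β` for all `τ ≥ 0`. -/
theorem stmt16 (β c δ : ℝ) (hβ : 0 < β) (hc : 0 < c) (hδ : 0 < δ)
    (W : ℝ → ℝ)
    (hW_nonneg : ∀ x > (0:ℝ), 0 ≤ W x)
    (hW : ∀ x > (0:ℝ), W x * Real.exp (W x) = x)
    (f : ℝ → ℝ) (hf : ∀ y, f y = Real.exp (y / c)) :
    ∀ τ ≥ (0:ℝ),
      let ybar := c * W (Real.exp (1 - δ * τ)) - c * (β + δ) / β
      let y₀ := -c * δ / β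
      Real.exp (-δ * τ)
        = (f ybar / f y₀) * (β * ybar / c + β + δ) / β := by
  intro τ hτ
  intro ybar y₀
  set w := W (Real.exp (1 - δ * τ)) with hw
  have hx : w * Real.exp w = Real.exp (1 - δ * τ) := hW _ (Real.exp_pos _)
  have h1 : β * ybar / c + β + δ = β * w := by
    simp only [ybar]; field_simp; ring
  have h2 : f ybar / f y₀ = Real.exp (w - 1) := by
    rw [hf, hf, ← Real.exp_sub]
    congr 1
    simp only [ybar, y₀]
    field_simp
    ring
  rw [h2, h1]
  have h3 : Real.exp (1 - δ * τ) = Real.exp 1 * Real.exp (-δ * τ) := by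
    rw [← Real.exp_add]; ring_nf
  have key : Real.exp (w - 1) * w = Real.exp (-δ * τ) := by
    have he1 : (0:ℝ) < Real.exp 1 := Real.exp_pos 1
    rw [Real.exp_sub]
    rw [div_mul_eq_mul_div, div_eq_iff (ne_of_gt he1)]
    calc Real.exp w * w = w * Real.exp w := by ring
      _ = Real.exp 1 * Real.exp (-δ * τ) := by rw [hx, h3]
      _ = Real.exp (-δ * τ) * Real.exp 1 := by ring
  rw [show Real.exp (w - 1) * (β * w) / β = Real.exp (w - 1) * w by
    field_simp, key]
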